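/- For every λ ∈ ℤ^N and every 1 ≤ t ≤ N: t is normal for λ (with respect to the parity sequence p̄) if and only if w₀(t) is conormal for s̃(λ) (with respect to the opposite parity sequence p̄′). -/

import Mathlib

namespace Kujawa

open Finset

variable {n : ℕ}

/-- The sign `(−1)^{p̄ i}` attached to the parity sequence `pb`. -/
def sg (pb : Fin (n + 1) → ZMod 2) (i : Fin (n + 1)) : ℤ :=
  if pb i = 0 then 1 else -1

/-- `ϑ_j = ∑_{i > j} (−1)^{p̄_i + p̄_j}`. -/
def theta (pb : Fin (n + 1) → ZMod 2) (j : Fin (n + 1)) : ℤ :=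
  ∑ i ∈ Finset.Ioi j, sg pb i * sg pb j

/-- The standard basis vector `ε_i` of `X(T) = ℤ^N`. -/
def eps (i : Fin (n + 1)) : Fin (n + 1) → ℤ := fun j => if j = i then 1 else 0

/-- The `j`-th residue `r_j(λ) = (λ + ϑ, ε_j)`. -/
def res (pb : Fin (n + 1) → ZMod 2) (l : Fin (n + 1) → ℤ) (j : Fin (n + 1)) : ℤ :=
  sg pb j * (l j + theta pb j)

/-- `ρ = ϑ + ∑_{i : p̄_i = 0} ε_i`, coordinatewise. -/
def rho (pb : Fin (n + 1) → ZMod 2) (k : Fin (n + 1)) : ℤ :=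
  theta pb k + (if pb k = 0 then 1 else 0)

/-- `l(λ) = ∑ λ_i`. -/
def ell (l : Fin (n + 1) → ℤ) : ℤ := ∑ i, l i

/-- The central character value `Z_r(λ)`. -/
def Zint (pb : Fin (n + 1) → ZMod 2) (r : ℕ) (l : Fin (n + 1) → ℤ) : ℤ :=
  ∑ s ∈ Finset.Icc 1 r, (-1 : ℤ) ^ (s - 1) *
    ∑ K ∈ Finset.powersetCard s (Finset.univ : Finset (Fin (n + 1))),
      ∑ a ∈ Fintype.piFinset (fun _ : Fin (n + 1) => Finset.range (r + 2)),
        if (∑ k ∈ K, a k) = r - s + 1 ∧ (∀ k, k ∉ K → a k = 0) then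
          (∏ k ∈ K, sg pb k) * ∏ k ∈ K, res pb l k ^ a k
        else 0

/-- `A_r(λ) = #{i : r_i(λ+ε_i) ≡ r (mod p)}`. -/
def Acount (pb : Fin (n + 1) → ZMod 2) (p : ℕ) (r : ZMod p) (l : Fin (n + 1) → ℤ) : ℕ :=
  (Finset.univ.filter fun i : Fin (n + 1) => ((res pb (l + eps i) i : ℤ) : ZMod p) = r).card

/-- `B_r(λ) = #{i : r_i(λ) ≡ r (mod p)}`. -/
def Bcount (pb : Fin (n + 1) → ZMod 2) (p : ℕ) (r : ZMod p) (l : Fin (n + 1) → ℤ) : ℕ :=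
  (Finset.univ.filter fun i : Fin (n + 1) => ((res pb l i : ℤ) : ZMod p) = r).card

/-- For `p = 0`: `γ_a` is the basis element `single a 1` of the free module `ℤ →₀ ℤ`. -/
noncomputable def gamma0 (a : ℤ) : ℤ →₀ ℤ := Finsupp.single a 1

/-- `wt` for `p = 0`, with values in the free `ℤ`-module on basis `{γ_a : a ∈ ℤ}`. -/
noncomputable def wt0 (pb : Fin (n + 1) → ZMod 2) (l : Fin (n + 1) → ℤ) : ℤ →₀ ℤ :=
  ∑ i : Fin (n + 1), sg pb i • gamma0 (sg pb i * (l i + rho pb i))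

/-- `Λ_r ∈ P = ℤδ ⊕ ⊕_{r ∈ ℤ/pℤ} ℤΛ_r`. -/
def LamP (p : ℕ) (r : ZMod p) : ℤ × (ZMod p → ℤ) := (0, fun s => if s = r then 1 else 0)

/-- `δ ∈ P`. -/
def delP (p : ℕ) : ℤ × (ZMod p → ℤ) := (1, 0)

/-- `γ_a = Λ_{s mod p} − Λ_{(s−1) mod p} − d·δ`, where `a = p·d + s` with `1 ≤ s ≤ p`. -/
def gammaP (p : ℕ) (a : ℤ) : ℤ × (ZMod p → ℤ) :=
  LamP p (((a - 1) % (p : ℤ) + 1 : ℤ) : ZMod p) - LamP p (((a - 1) % (p : ℤ) : ℤ) : ZMod p) -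
    ((a - 1) / (p : ℤ)) • delP p

/-- `wt` for prime `p`. -/
def wtP (p : ℕ) (pb : Fin (n + 1) → ZMod 2) (l : Fin (n + 1) → ℤ) : ℤ × (ZMod p → ℤ) :=
  ∑ i : Fin (n + 1), sg pb i • gammaP p (sg pb i * (l i + rho pb i))

/-- Entry `i` of the `r`-signature of `λ`: `1` codes `+`, `-1` codes `−`, `0` codes `0`. -/
def sig (pb : Fin (n + 1) → ZMod 2) (p : ℕ) (r : ZMod p) (l : Fin (n + 1) → ℤ)
    (i : Fin (n + 1)) : ℤ :=
  if ((res pb (l + eps i) i : ℤ) : ZMod p) = r then 1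
  else if ((res pb l i : ℤ) : ZMod p) = r then -1
  else 0

/-- Number of `−`'s of the `r`-signature of `λ` in positions `[i..j]`. -/
noncomputable def nM (pb : Fin (n + 1) → ZMod 2) (p : ℕ) (r : ZMod p) (l : Fin (n + 1) → ℤ)
    (i j : Fin (n + 1)) : ℕ :=
  Set.ncard {k : Fin (n + 1) | k ∈ Finset.Icc i j ∧ sig pb p r l k = -1}

/-- Number of `+`'s of the `r`-signature of `λ` in positions `[i..j]`. -/
noncomputable def nP (pb : Fin (n + 1) → ZMod 2) (p : ℕ) (r : ZMod p) (l : Fin (n + 1) → ℤ)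
    (i j : Fin (n + 1)) : ℕ :=
  Set.ncard {k : Fin (n + 1) | k ∈ Finset.Icc i j ∧ sig pb p r l k = 1}

/-- `i` is the position of a `−` in the reduced `r`-signature of `λ` (i.e. `i` is
`r`-normal for `λ`): the `−` at `i` is never cancelled, which happens exactly when every
interval `[i..j]` contains strictly more `−`'s than `+`'s. -/
def RMinus (pb : Fin (n + 1) → ZMod 2) (p : ℕ) (r : ZMod p) (l : Fin (n + 1) → ℤ)
    (i : Fin (n + 1)) : Prop :=
  sig pb p r l i = -1 ∧ ∀ j : Fin (n + 1), i ≤ j → nP pb p r l i j < nM pb p r l i j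

/-- `i` is the position of a `+` in the reduced `r`-signature of `λ` (i.e. `i` is
`r`-conormal for `λ`). -/
def RPlus (pb : Fin (n + 1) → ZMod 2) (p : ℕ) (r : ZMod p) (l : Fin (n + 1) → ℤ)
    (i : Fin (n + 1)) : Prop :=
  sig pb p r l i = 1 ∧ ∀ j : Fin (n + 1), j ≤ i → nM pb p r l j i < nP pb p r l j i

/-- `i` is the position of the leftmost `−` in the reduced `r`-signature (`r`-good). -/
def RGood (pb : Fin (n + 1) → ZMod 2) (p : ℕ) (r : ZMod p) (l : Fin (n + 1) → ℤ)
    (i : Fin (n + 1)) : Prop :=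
  RMinus pb p r l i ∧ ∀ j : Fin (n + 1), j < i → ¬ RMinus pb p r l j

/-- `i` is the position of the rightmost `+` in the reduced `r`-signature (`r`-cogood). -/
def RCogood (pb : Fin (n + 1) → ZMod 2) (p : ℕ) (r : ZMod p) (l : Fin (n + 1) → ℤ)
    (i : Fin (n + 1)) : Prop :=
  RPlus pb p r l i ∧ ∀ j : Fin (n + 1), i < j → ¬ RPlus pb p r l j

open Classical in
/-- The crystal operator `ẽ*_r`, with `none` playing the role of `0`. -/
noncomputable def eStar (pb : Fin (n + 1) → ZMod 2) (p : ℕ) (r : ZMod p)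
    (l : Fin (n + 1) → ℤ) : Option (Fin (n + 1) → ℤ) :=
  if h : (Finset.univ.filter (RMinus pb p r l)).Nonempty then
    some (l - eps ((Finset.univ.filter (RMinus pb p r l)).min' h))
  else none

open Classical in
/-- The crystal operator `f̃*_r`, with `none` playing the role of `0`. -/
noncomputable def fStar (pb : Fin (n + 1) → ZMod 2) (p : ℕ) (r : ZMod p)
    (l : Fin (n + 1) → ℤ) : Option (Fin (n + 1) → ℤ) :=
  if h : (Finset.univ.filter (RPlus pb p r l)).Nonempty then
    some (l + eps ((Finset.univ.filter (RPlus pb p r l)).max' h))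
  else none

/-- `A ↓ B`: there is an injection `θ : A → B` with `θ a ≤ a` for all `a ∈ A`. -/
def Down (A B : Finset (Fin (n + 1))) : Prop :=
  ∃ θ : Fin (n + 1) → Fin (n + 1), Set.InjOn θ ↑A ∧ ∀ a ∈ A, θ a ∈ B ∧ θ a ≤ a

/-- `C_{i,j}(λ) = {h ∈ (i..j) : c_{i,h}(λ) ≡ 0 (mod p)}`. -/
def Cset (pb : Fin (n + 1) → ZMod 2) (p : ℕ) (l : Fin (n + 1) → ℤ) (i j : Fin (n + 1)) :
    Finset (Fin (n + 1)) :=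
  (Finset.Ioo i j).filter fun h => ((res pb l i - res pb l h : ℤ) : ZMod p) = 0

/-- `B_{i,j}(λ) = {h ∈ [i..j) : b_{i,h}(λ) ≡ 0 (mod p)}`. -/
def Bset (pb : Fin (n + 1) → ZMod 2) (p : ℕ) (l : Fin (n + 1) → ℤ) (i j : Fin (n + 1)) :
    Finset (Fin (n + 1)) :=
  (Finset.Ico i j).filter fun h =>
    ((res pb l i - res pb (l + eps (h + 1)) (h + 1) : ℤ) : ZMod p) = 0

/-- The opposite parity sequence `p̄′_k = p̄_{w₀ k} + 1̄`, where `w₀ k = N + 1 − k`. -/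
def pbRev (pb : Fin (n + 1) → ZMod 2) : Fin (n + 1) → ZMod 2 := fun k => pb k.rev + 1

/-- `s̃ : ℤ^N → ℤ^N`, `(s̃ λ)_{w₀ i} = −λ_i`. -/
def stilde (l : Fin (n + 1) → ℤ) : Fin (n + 1) → ℤ := fun k => -l k.rev

/-- `(i, j)` is an `r`-canceling pair for `λ` (for `i < j`). -/
def CPair (pb : Fin (n + 1) → ZMod 2) (p : ℕ) (r : ZMod p) (l : Fin (n + 1) → ℤ)
    (i j : Fin (n + 1)) : Prop :=
  sig pb p r l i = -1 ∧ sig pb p r l j = 1 ∧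
    ∀ k : Fin (n + 1), i < k → k < j → sig pb p r l k = 0

/-- `(i i+1)·λ`: interchange coordinates `i` and `i+1`. -/
def swapL (i : Fin (n + 1)) (l : Fin (n + 1) → ℤ) : Fin (n + 1) → ℤ :=
  fun k => if k = i then l (i + 1) else if k = i + 1 then l i else l k

/-- The parity sequence obtained from `pb` by interchanging entries `i` and `i+1`. -/
def pbSwap (pb : Fin (n + 1) → ZMod 2) (i : Fin (n + 1)) : Fin (n + 1) → ZMod 2 :=
  fun k => if k = i then pb (i + 1) else if k = i + 1 then pb i else pb k

/-- The odd reflection `s_i` on `X(T)`. -/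
def sI (pb : Fin (n + 1) → ZMod 2) (p : ℕ) (i : Fin (n + 1)) (l : Fin (n + 1) → ℤ) :
    Fin (n + 1) → ℤ :=
  if ((sg pb i * l i - sg pb (i + 1) * l (i + 1) : ℤ) : ZMod p) = 0 then swapL i l
  else swapL i l + eps i - eps (i + 1)


section Aux10

lemma sg_sq (pb : Fin (n + 1) → ZMod 2) (i : Fin (n + 1)) : sg pb i * sg pb i = 1 := by
  unfold sg; split <;> norm_num

lemma sg_eq_or (pb : Fin (n + 1) → ZMod 2) (i : Fin (n + 1)) :
    sg pb i = 1 ∨ sg pb i = -1 := by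
  unfold sg; split <;> simp

lemma sg_rev' (pb : Fin (n + 1) → ZMod 2) (k : Fin (n + 1)) :
    sg (pbRev pb) k = - sg pb k.rev := by
  have h2 : ∀ x : ZMod 2, x = 0 ∨ x = 1 := by decide
  have h10 : (1 : ZMod 2) ≠ 0 := by decide
  have h11 : (1 + 1 : ZMod 2) = 0 := by decide
  unfold sg pbRev
  rcases h2 (pb k.rev) with h | h <;> simp [h, h10, h11]

lemma sum_rev_Ioi (k : Fin (n + 1)) (f : Fin (n + 1) → ℤ) :
    ∑ i ∈ Finset.Ioi k, f i.rev = ∑ i ∈ Finset.Iio k.rev, f i := by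
  refine Finset.sum_nbij' (fun i => i.rev) (fun i => i.rev) ?_ ?_
    (fun i _ => Fin.rev_rev i) (fun i _ => Fin.rev_rev i) (fun i _ => rfl)
  · intro a ha
    simp only [Finset.mem_Ioi] at ha
    simpa [Finset.mem_Iio] using (Fin.rev_lt_rev (i := a) (j := k)).mpr ha
  · intro a ha
    simp only [Finset.mem_Iio] at ha
    have := (Fin.rev_lt_rev (i := k.rev) (j := a)).mpr ha
    simpa [Finset.mem_Ioi, Fin.rev_rev] using this

lemma sum_Iio_add_sum_Ici' (j : Fin (n + 1)) (f : Fin (n + 1) → ℤ) :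
    ∑ i ∈ Finset.Iio j, f i + ∑ i ∈ Finset.Ici j, f i = ∑ i, f i := by
  have h1 : (Finset.univ : Finset (Fin (n + 1))).filter (· < j) = Finset.Iio j := by
    ext x; simp
  have h2 : (Finset.univ : Finset (Fin (n + 1))).filter (fun x => ¬ x < j) = Finset.Ici j := by
    ext x; simp [not_lt]
  rw [← h1, ← h2]
  exact Finset.sum_filter_add_sum_filter_not _ _ _

lemma res_rev (pb : Fin (n + 1) → ZMod 2) (lam : Fin (n + 1) → ℤ) (k : Fin (n + 1)) :
    res (pbRev pb) (stilde lam) k = res pb lam k.rev - (∑ i, sg pb i) + sg pb k.rev := by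
  have hth : theta (pbRev pb) k = (∑ i ∈ Finset.Iio k.rev, sg pb i) * sg pb k.rev := by
    unfold theta
    rw [← sum_rev_Ioi k (fun i => sg pb i), Finset.sum_mul]
    refine Finset.sum_congr rfl fun i _ => ?_
    rw [sg_rev', sg_rev']; ring
  have hIci : sg pb k.rev + ∑ i ∈ Finset.Ioi k.rev, sg pb i = ∑ i ∈ Finset.Ici k.rev, sg pb i :=
    Finset.add_sum_Ioi_eq_sum_Ici _
  have hS : (∑ i, sg pb i) =
      (∑ i ∈ Finset.Iio k.rev, sg pb i) + (sg pb k.rev + ∑ i ∈ Finset.Ioi k.rev, sg pb i) := by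
    rw [hIci, sum_Iio_add_sum_Ici']
  have htheta : theta pb k.rev = (∑ i ∈ Finset.Ioi k.rev, sg pb i) * sg pb k.rev := by
    unfold theta; rw [Finset.sum_mul]
  have hsq := sg_sq pb k.rev
  unfold res stilde
  rw [hth, sg_rev', htheta, hS]
  linear_combination (-(∑ i ∈ Finset.Iio k.rev, sg pb i) - (∑ i ∈ Finset.Ioi k.rev, sg pb i)) * hsq

lemma res_add_eps (pb : Fin (n + 1) → ZMod 2) (l : Fin (n + 1) → ℤ) (j : Fin (n + 1)) :
    res pb (l + eps j) j = res pb l j + sg pb j := by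
  unfold res eps
  simp only [Pi.add_apply, if_pos rfl, if_true, eq_self_iff_true]
  ring

lemma nontrivial_zmod {p : ℕ} (hp : p = 0 ∨ p.Prime) : Nontrivial (ZMod p) := by
  rcases hp with rfl | hp
  · exact inferInstanceAs (Nontrivial ℤ)
  · haveI := Fact.mk hp
    infer_instance

lemma sg_cast_ne {p : ℕ} (hp : p = 0 ∨ p.Prime) (pb : Fin (n + 1) → ZMod 2) (j : Fin (n + 1)) :
    ((sg pb j : ℤ) : ZMod p) ≠ 0 := by
  haveI := nontrivial_zmod hp
  rcases sg_eq_or pb j with h | h <;> rw [h] <;> simp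

lemma sig_rev {p : ℕ} (hp : p = 0 ∨ p.Prime) (pb : Fin (n + 1) → ZMod 2)
    (lam : Fin (n + 1) → ℤ) (r : ZMod p) (k : Fin (n + 1)) :
    sig (pbRev pb) p (r - (((∑ i, sg pb i : ℤ) : ZMod p))) (stilde lam) k
      = - sig pb p r lam k.rev := by
  set j := k.rev with hj
  have hb : res (pbRev pb) (stilde lam) k = res pb (lam + eps j) j - (∑ i, sg pb i) := by
    rw [res_rev, res_add_eps]; ring
  have ha : res (pbRev pb) (stilde lam + eps k) k = res pb lam j - (∑ i, sg pb i) := by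
    rw [res_add_eps, res_rev, sg_rev', ← hj]; ring
  have ha' : ((res (pbRev pb) (stilde lam + eps k) k : ℤ) : ZMod p)
      = ((res pb lam j : ℤ) : ZMod p) - (((∑ i, sg pb i : ℤ) : ZMod p)) := by
    rw [ha]; push_cast; ring
  have hb' : ((res (pbRev pb) (stilde lam) k : ℤ) : ZMod p)
      = ((res pb (lam + eps j) j : ℤ) : ZMod p) - (((∑ i, sg pb i : ℤ) : ZMod p)) := by
    rw [hb]; push_cast; ring
  have hexc : ¬ ((((res pb (lam + eps j) j : ℤ) : ZMod p) = r) ∧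
      (((res pb lam j : ℤ) : ZMod p) = r)) := by
    rintro ⟨h1, h2⟩
    apply sg_cast_ne hp pb j
    have h3 : ((res pb (lam + eps j) j : ℤ) : ZMod p) = ((res pb lam j : ℤ) : ZMod p) := by
      rw [h1, h2]
    rw [res_add_eps] at h3
    push_cast at h3
    linear_combination h3
  unfold sig
  rw [ha', hb']
  simp only [sub_left_inj]
  by_cases h1 : ((res pb (lam + eps j) j : ℤ) : ZMod p) = r <;>
    by_cases h2 : ((res pb lam j : ℤ) : ZMod p) = r
  · exact absurd ⟨h1, h2⟩ hexc
  · simp [h1, h2]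
  · simp [h1, h2]
  · simp [h1, h2]

lemma sigset_rev (f g : Fin (n + 1) → ℤ) (hfg : ∀ k, f k = - g k.rev)
    (a b : Fin (n + 1)) (c : ℤ) :
    {k : Fin (n + 1) | k ∈ Finset.Icc a b ∧ f k = c} =
      Fin.rev '' {m : Fin (n + 1) | m ∈ Finset.Icc b.rev a.rev ∧ g m = -c} := by
  ext k
  simp only [Set.mem_image, Set.mem_setOf_eq, Finset.mem_Icc]
  constructor
  · rintro ⟨⟨h1, h2⟩, h3⟩
    refine ⟨k.rev, ⟨⟨Fin.rev_le_rev.mpr h2, Fin.rev_le_rev.mpr h1⟩, ?_⟩, Fin.rev_rev k⟩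
    have := hfg k
    rw [h3] at this
    linarith
  · rintro ⟨m, ⟨⟨h1, h2⟩, h3⟩, rfl⟩
    have hrr : m.rev.rev = m := Fin.rev_rev m
    refine ⟨⟨?_, ?_⟩, ?_⟩
    · have := Fin.rev_le_rev.mpr h2
      rwa [Fin.rev_rev] at this
    · have := Fin.rev_le_rev.mpr h1
      rwa [Fin.rev_rev] at this
    · rw [hfg, hrr, h3]; ring

lemma nM_rev {p : ℕ} (hp : p = 0 ∨ p.Prime) (pb : Fin (n + 1) → ZMod 2)
    (lam : Fin (n + 1) → ℤ) (r : ZMod p) (a b : Fin (n + 1)) :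
    nM (pbRev pb) p (r - (((∑ i, sg pb i : ℤ) : ZMod p))) (stilde lam) a b
      = nP pb p r lam b.rev a.rev := by
  unfold nM nP
  rw [sigset_rev _ (sig pb p r lam) (sig_rev hp pb lam r) a b (-1)]
  rw [Set.ncard_image_of_injective _ Fin.rev_injective]
  norm_num

lemma nP_rev {p : ℕ} (hp : p = 0 ∨ p.Prime) (pb : Fin (n + 1) → ZMod 2)
    (lam : Fin (n + 1) → ℤ) (r : ZMod p) (a b : Fin (n + 1)) :
    nP (pbRev pb) p (r - (((∑ i, sg pb i : ℤ) : ZMod p))) (stilde lam) a b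
      = nM pb p r lam b.rev a.rev := by
  unfold nM nP
  rw [sigset_rev _ (sig pb p r lam) (sig_rev hp pb lam r) a b 1]
  rw [Set.ncard_image_of_injective _ Fin.rev_injective]

lemma RMinus_iff_RPlus {p : ℕ} (hp : p = 0 ∨ p.Prime) (pb : Fin (n + 1) → ZMod 2)
    (lam : Fin (n + 1) → ℤ) (r : ZMod p) (t : Fin (n + 1)) :
    RMinus pb p r lam t ↔
      RPlus (pbRev pb) p (r - (((∑ i, sg pb i : ℤ) : ZMod p))) (stilde lam) t.rev := by
  unfold RMinus RPlus
  constructor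
  · rintro ⟨h1, h2⟩
    constructor
    · rw [sig_rev hp, Fin.rev_rev, h1]; ring
    · intro j hj
      rw [nM_rev hp, nP_rev hp, Fin.rev_rev]
      apply h2
      have := Fin.rev_le_rev.mpr hj
      rwa [Fin.rev_rev] at this
  · rintro ⟨h1, h2⟩
    rw [sig_rev hp, Fin.rev_rev] at h1
    constructor
    · linarith
    · intro j hj
      have hj' : j.rev ≤ t.rev := Fin.rev_le_rev.mpr hj
      have := h2 j.rev hj'
      rwa [nM_rev hp, nP_rev hp, Fin.rev_rev, Fin.rev_rev] at this

end Aux10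

/-- `t` is normal for `λ` (w.r.t. `p̄`) iff `w₀ t` is conormal for `s̃ λ`
(w.r.t. the opposite parity sequence `p̄′`). -/
theorem statement10 (p : ℕ) (hp : p = 0 ∨ p.Prime) (pb : Fin (n + 1) → ZMod 2)
    (lam : Fin (n + 1) → ℤ) (t : Fin (n + 1)) :
    (∃ r : ZMod p, RMinus pb p r lam t) ↔
      (∃ r : ZMod p, RPlus (pbRev pb) p r (stilde lam) t.rev) := by
  constructor
  · rintro ⟨r, h⟩
    exact ⟨r - (((∑ i, sg pb i : ℤ) : ZMod p)), (RMinus_iff_RPlus hp pb lam r t).mp h⟩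
  · rintro ⟨r, h⟩
    refine ⟨r + (((∑ i, sg pb i : ℤ) : ZMod p)),
      (RMinus_iff_RPlus hp pb lam _ t).mpr ?_⟩
    rwa [add_sub_cancel_right]

end Kujawa
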